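/- (Proposition 1.) Let N be a finite set of voters and let 𝒮 be the sequential unanimity rule associated with a sequence S = (S_1,…,S_K) of nonempty, pairwise distinct subsets of N with S_K a singleton. Then 𝒮 is neutral and strategy-proof. -/
import Mathlib


/-- A rule is strategy-proof if whenever a voter's misreport would give his true
preference, truthful reporting gives it as well. -/
def StrategyProof {N : Type*} [DecidableEq N] (f : (N → Bool) → Bool) : Prop :=
  ∀ (R : N → Bool) (i : N) (b : Bool), f (Function.update R i b) = R i → f R = R i

/-- A rule is neutral if it commutes with flipping the two candidates. -/
def Neutral {N : Type*} (f : (N → Bool) → Bool) : Prop :=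
  ∀ R : N → Bool, f (fun i => !(R i)) = !(f R)

/-- An M-winning coalition set: nonempty, members nonempty, minimality (P1),
and Moulin's property (P2). -/
def IsMWCS {N : Type*} [DecidableEq N] (𝒞 : Set (Finset N)) : Prop :=
  𝒞.Nonempty ∧ (∀ C ∈ 𝒞, C.Nonempty) ∧
    (∀ C ∈ 𝒞, ∀ C' ∈ 𝒞, C ⊆ C' → C = C') ∧
    (∀ C : Finset N, (∃ C' ∈ 𝒞, C' ⊆ C) ↔ ∀ C'' ∈ 𝒞, (C ∩ C'').Nonempty)

/-- `f` is the M-winning coalition rule associated with `𝒞`. -/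
def IsMWCRule {N : Type*} (𝒞 : Set (Finset N)) (f : (N → Bool) → Bool) : Prop :=
  ∀ (R : N → Bool) (x : Bool), f R = x ↔ ∃ C ∈ 𝒞, ∀ i ∈ C, R i = x

/-- `g` is the sequential unanimity rule associated with the sequence `S`. -/
def IsSURule {N : Type*} {K : ℕ} (S : Fin K → Finset N) (g : (N → Bool) → Bool) : Prop :=
  ∀ (R : N → Bool) (x : Bool),
    g R = x ↔ ∃ k : Fin K, (∀ i ∈ S k, R i = x) ∧
      ∀ l < k, ∃ i ∈ S l, ∃ j ∈ S l, R i ≠ R j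

/-- Proposition 1: sequential unanimity rules are neutral and strategy-proof. -/
theorem stmt5 {N : Type*} [Fintype N] [DecidableEq N] {K : ℕ}
    (S : Fin (K + 1) → Finset N) (hne : ∀ k, (S k).Nonempty)
    (hinj : Function.Injective S) (hlast : (S (Fin.last K)).card = 1)
    (g : (N → Bool) → Bool) (hg : IsSURule S g) :
    Neutral g ∧ StrategyProof g := by
  constructor
  · intro R
    obtain ⟨k, hk1, hk2⟩ := (hg R (g R)).mp rfl
    refine (hg _ (!(g R))).mpr ⟨k, fun i hi => by rw [hk1 i hi], ?_⟩
    intro l hl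
    obtain ⟨a, ha, c, hc, hac⟩ := hk2 l hl
    exact ⟨a, ha, c, hc, by simpa using hac⟩
  · intro R i b hb
    by_cases hbi : b = R i
    · subst hbi; rwa [Function.update_eq_self] at hb
    · have hb' : b = !(R i) := by cases b <;> cases h : R i <;> simp_all
      set x := R i with hx
      set R' := Function.update R i b with hR'
      obtain ⟨k, hk1, hk2⟩ := (hg R' x).mp hb
      have hRR' : ∀ j ≠ i, R' j = R j := fun j hj => Function.update_of_ne hj _ _
      have hRi' : R' i = !x := by rw [hR', Function.update_self, hb']
      have hik : i ∉ S k := by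
        intro h
        have := hk1 i h
        rw [hRi'] at this
        simp at this
      have claim : ∀ l ≤ k, (∃ a ∈ S l, ∃ c ∈ S l, R a ≠ R c) ∨ ∀ j ∈ S l, R j = x := by
        intro l hl
        rcases eq_or_lt_of_le hl with heq | hlt
        · right
          intro j hj
          subst heq
          have hji : j ≠ i := fun h => hik (h ▸ hj)
          rw [← hRR' j hji]; exact hk1 j hj
        · by_cases hsplit : ∃ a ∈ S l, ∃ c ∈ S l, R a ≠ R c
          · exact Or.inl hsplit
          · right
            push_neg at hsplit
            obtain ⟨a, ha, c, hc, hac⟩ := hk2 l hlt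
            have key : ∃ d ∈ S l, R d = x := by
              by_cases hai : a = i
              · refine ⟨c, hc, ?_⟩
                have hci : c ≠ i := fun h => hac (by rw [hai, h])
                have hRa : R' a = !x := by rw [hai, hRi']
                have : R' c ≠ !x := fun h => hac (by rw [hRa, h])
                rw [← hRR' c hci]
                cases hcv : R' c <;> cases hxv : x <;> simp_all
              · by_cases hci : c = i
                · refine ⟨a, ha, ?_⟩
                  have hRc : R' c = !x := by rw [hci, hRi']
                  have : R' a ≠ !x := hRc ▸ hac
                  rw [← hRR' a hai]
                  cases hav : R' a <;> cases hxv : x <;> simp_all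
                · exfalso
                  rw [hRR' a hai, hRR' c hci] at hac
                  exact hac (hsplit a ha c hc)
            obtain ⟨d, hd, hdx⟩ := key
            intro j hj
            rw [hsplit j hj d hd, hdx]
      classical
      have hkT : k ≤ k ∧ ∀ j ∈ S k, R j = x := by
        refine ⟨le_refl k, ?_⟩
        rcases claim k (le_refl k) with h | h
        · obtain ⟨a, ha, c, hc, hac⟩ := h
          have hai : a ≠ i := fun h => hik (h ▸ ha)
          have hci : c ≠ i := fun h => hik (h ▸ hc)
          exact absurd (by rw [← hRR' a hai, ← hRR' c hci, hk1 a ha, hk1 c hc]) hac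
        · exact h
      set T := Finset.univ.filter (fun m : Fin (K+1) => m ≤ k ∧ ∀ j ∈ S m, R j = x) with hT
      have hkmem : k ∈ T := Finset.mem_filter.mpr ⟨Finset.mem_univ _, hkT⟩
      have hTne : T.Nonempty := ⟨k, hkmem⟩
      set m := T.min' hTne with hm
      have hmT : m ∈ T := T.min'_mem hTne
      rw [hT, Finset.mem_filter] at hmT
      refine (hg R x).mpr ⟨m, hmT.2.2, ?_⟩
      intro l hlm
      have hlk : l ≤ k := le_of_lt (lt_of_lt_of_le hlm hmT.2.1)
      rcases claim l hlk with h | h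
      · exact h
      · exfalso
        have : l ∈ T := Finset.mem_filter.mpr ⟨Finset.mem_univ _, hlk, h⟩
        exact absurd (T.min'_le l this) (not_le.mpr hlm)
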